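/- arXiv:1809.10231 — 3 statements merged into one kernel-verified Lean document; each statement's English description precedes it below -/
import Mathlib

section
/- Let 0 < u ≤ 2^{−5/2} and let p ∈ [0,1]². Then the Lebesgue measure (area) of the set T(p) = {q ∈ [0,1]² : p ≤ q componentwise, q ≠ p, and min(q₁ − p₁, q₂ − p₂) ≤ u^{1/5}·‖q − p‖₂} is at most √2 · u^{1/5}. -/
open MeasureTheory

lemma vol_box (a b a' b' : ℝ) :
    volume {q : EuclideanSpace ℝ (Fin 2) | q 0 ∈ Set.Icc a b ∧ q 1 ∈ Set.Icc a' b'} =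
      ENNReal.ofReal (b - a) * ENNReal.ofReal (b' - a') := by
  have hset : {q : EuclideanSpace ℝ (Fin 2) | q 0 ∈ Set.Icc a b ∧ q 1 ∈ Set.Icc a' b'} =
      (MeasurableEquiv.toLp 2 (Fin 2 → ℝ)).symm ⁻¹'
        (Set.pi Set.univ (fun i => Set.Icc (![a, a'] i) (![b, b'] i))) := by
    ext q
    simp only [Set.mem_preimage, Set.mem_pi, Set.mem_univ, forall_true_left, Set.mem_setOf_eq]
    constructor
    · rintro ⟨h0, h1⟩ i
      fin_cases i <;> simpa [MeasurableEquiv.toLp]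
    · intro h
      have h0 := h 0
      have h1 := h 1
      simp [MeasurableEquiv.toLp] at h0 h1
      exact ⟨h0, h1⟩
  rw [hset,
    (EuclideanSpace.volume_preserving_symm_measurableEquiv_toLp (Fin 2)).measure_preimage
      ((MeasurableSet.univ_pi fun i => measurableSet_Icc).nullMeasurableSet),
    volume_pi_pi, Fin.prod_univ_two]
  simp [Real.volume_Icc]

lemma gauss_sum (m : ℕ) : ∑ i : Fin m, ((i : ℝ) + 1) = m * (m + 1) / 2 := by
  induction m with
  | zero => simp
  | succ k ih =>
    rw [Fin.sum_univ_castSucc]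
    simp only [Fin.coe_castSucc, Fin.val_last]
    rw [ih]; push_cast; ring

/-- The non-diagonal volume lemma (Lemma `non-diag_lemma`): for
`0 < u ≤ 2^{−5/2}` and `p` in the unit square, the area of the set of points
`q` of the unit square with `p ≤ q`, `q ≠ p`, whose direction from `p` is
non-diagonal (i.e. `min(q₁−p₁, q₂−p₂) ≤ u^{1/5}·‖q−p‖₂`) is at most
`√2 · u^{1/5}`. -/
theorem stmt_9 (u : ℝ) (hu0 : 0 < u) (hu : u ≤ (2 : ℝ) ^ (-(5 / 2) : ℝ))
    (p : EuclideanSpace ℝ (Fin 2)) (hp : ∀ i, p i ∈ Set.Icc (0 : ℝ) 1) :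
    volume {q : EuclideanSpace ℝ (Fin 2) |
        (∀ i, q i ∈ Set.Icc (0 : ℝ) 1) ∧ (∀ i, p i ≤ q i) ∧ q ≠ p ∧
        min (q 0 - p 0) (q 1 - p 1) ≤ u ^ ((1 : ℝ) / 5) * ‖q - p‖} ≤
      ENNReal.ofReal (Real.sqrt 2 * u ^ ((1 : ℝ) / 5)) := by
  set ε := u ^ ((1 : ℝ) / 5) with hεdef
  have hε0 : 0 < ε := Real.rpow_pos_of_pos hu0 _
  set c := Real.sqrt 2 * ε with hcdef
  have hc0 : 0 < c := by positivity
  set S := {q : EuclideanSpace ℝ (Fin 2) |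
      (∀ i, q i ∈ Set.Icc (0 : ℝ) 1) ∧ (∀ i, p i ≤ q i) ∧ q ≠ p ∧
      min (q 0 - p 0) (q 1 - p 1) ≤ ε * ‖q - p‖} with hSdef
  have key : ∀ n : ℕ, 0 < n → volume S ≤ ENNReal.ofReal (c * (n + 1) / n) := by
    intro n hn
    have hn0 : (0 : ℝ) < n := by exact_mod_cast hn
    -- index choice helper
    have hidx : ∀ d : ℝ, 0 ≤ d → d ≤ 1 →
        ∃ k : Fin n, (k : ℝ) / n ≤ d ∧ d ≤ ((k : ℝ) + 1) / n := by
      intro d hd0 hd1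
      by_cases h : ⌊(n : ℝ) * d⌋₊ < n
      · refine ⟨⟨⌊(n : ℝ) * d⌋₊, h⟩, ?_, ?_⟩
        · rw [div_le_iff₀ hn0]
          have := Nat.floor_le (a := (n : ℝ) * d) (by positivity)
          simpa [mul_comm] using this
        · rw [le_div_iff₀ hn0]
          have := Nat.lt_floor_add_one ((n : ℝ) * d)
          simp only [Fin.val_mk]
          nlinarith [this]
      · push_neg at h
        refine ⟨⟨n - 1, by omega⟩, ?_, ?_⟩
        · have h1 : (n : ℝ) ≤ (n : ℝ) * d := by
            have := (Nat.le_floor_iff (a := (n : ℝ) * d) (by positivity)).1 h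
            simpa using this
          have hd : 1 ≤ d := by
            nlinarith
          have : ((⟨n - 1, by omega⟩ : Fin n) : ℝ) = (n : ℝ) - 1 := by
            simp only [Fin.val_mk]
            push_cast [Nat.cast_sub hn]
            ring
          rw [this, div_le_iff₀ hn0]
          nlinarith
        · have : ((⟨n - 1, by omega⟩ : Fin n) : ℝ) = (n : ℝ) - 1 := by
            simp only [Fin.val_mk]
            push_cast [Nat.cast_sub hn]
            ring
          rw [this, le_div_iff₀ hn0]
          nlinarith
    set A : Fin n → Set (EuclideanSpace ℝ (Fin 2)) := fun i =>
      {q | q 0 ∈ Set.Icc (p 0 + (i : ℝ) / n) (p 0 + ((i : ℝ) + 1) / n) ∧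
           q 1 ∈ Set.Icc (p 1) (p 1 + c * ((i : ℝ) + 1) / n)} with hA
    set B : Fin n → Set (EuclideanSpace ℝ (Fin 2)) := fun i =>
      {q | q 0 ∈ Set.Icc (p 0) (p 0 + c * ((i : ℝ) + 1) / n) ∧
           q 1 ∈ Set.Icc (p 1 + (i : ℝ) / n) (p 1 + ((i : ℝ) + 1) / n)} with hB
    have hincl : S ⊆ (⋃ i, A i) ∪ (⋃ i, B i) := by
      intro q hq
      obtain ⟨hq1, hq2, _, hq4⟩ := hq
      have hd00 : 0 ≤ q 0 - p 0 := sub_nonneg.2 (hq2 0)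
      have hd10 : 0 ≤ q 1 - p 1 := sub_nonneg.2 (hq2 1)
      have hd01 : q 0 - p 0 ≤ 1 := by
        have := (hq1 0).2; have := (hp 0).1; linarith
      have hd11 : q 1 - p 1 ≤ 1 := by
        have := (hq1 1).2; have := (hp 1).1; linarith
      have hnorm : ‖q - p‖ = Real.sqrt ((q 0 - p 0) ^ 2 + (q 1 - p 1) ^ 2) := by
        rw [EuclideanSpace.norm_eq, Fin.sum_univ_two]
        simp [sq_abs]
      have hmaxsq : (q 0 - p 0) ^ 2 + (q 1 - p 1) ^ 2 ≤
          2 * (max (q 0 - p 0) (q 1 - p 1)) ^ 2 := by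
        nlinarith [pow_le_pow_left₀ hd00 (le_max_left (q 0 - p 0) (q 1 - p 1)) 2,
          pow_le_pow_left₀ hd10 (le_max_right (q 0 - p 0) (q 1 - p 1)) 2]
      have hmaxnn : 0 ≤ max (q 0 - p 0) (q 1 - p 1) := le_max_of_le_left hd00
      have hnle : ‖q - p‖ ≤ Real.sqrt 2 * max (q 0 - p 0) (q 1 - p 1) := by
        rw [hnorm]
        calc Real.sqrt ((q 0 - p 0) ^ 2 + (q 1 - p 1) ^ 2)
            ≤ Real.sqrt (2 * (max (q 0 - p 0) (q 1 - p 1)) ^ 2) :=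
              Real.sqrt_le_sqrt hmaxsq
          _ = Real.sqrt 2 * max (q 0 - p 0) (q 1 - p 1) := by
              rw [Real.sqrt_mul (by norm_num), Real.sqrt_sq hmaxnn]
      have hmin : min (q 0 - p 0) (q 1 - p 1) ≤ c * max (q 0 - p 0) (q 1 - p 1) := by
        calc min (q 0 - p 0) (q 1 - p 1) ≤ ε * ‖q - p‖ := hq4
          _ ≤ ε * (Real.sqrt 2 * max (q 0 - p 0) (q 1 - p 1)) :=
              mul_le_mul_of_nonneg_left hnle hε0.le
          _ = c * max (q 0 - p 0) (q 1 - p 1) := by rw [hcdef]; ring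
      rcases le_total (q 1 - p 1) (q 0 - p 0) with hle | hle
      · -- min = q1 - p1, max = q0 - p0
        obtain ⟨k, hk1, hk2⟩ := hidx (q 0 - p 0) hd00 hd01
        left
        refine Set.mem_iUnion.2 ⟨k, ⟨⟨by linarith, by linarith⟩, ⟨by linarith, ?_⟩⟩⟩
        have h1 : q 1 - p 1 ≤ c * (q 0 - p 0) := by
          have := hmin
          rw [min_eq_right hle, max_eq_left hle] at this
          exact this
        have h2 : c * (q 0 - p 0) ≤ c * (((k : ℝ) + 1) / n) :=
          mul_le_mul_of_nonneg_left hk2 hc0.le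
        have : q 1 - p 1 ≤ c * ((k : ℝ) + 1) / n := by
          rw [mul_div_assoc]; linarith
        linarith
      · obtain ⟨k, hk1, hk2⟩ := hidx (q 1 - p 1) hd10 hd11
        right
        refine Set.mem_iUnion.2 ⟨k, ⟨⟨by linarith, ?_⟩, ⟨by linarith, by linarith⟩⟩⟩
        have h1 : q 0 - p 0 ≤ c * (q 1 - p 1) := by
          have := hmin
          rw [min_eq_left hle, max_eq_right hle] at this
          exact this
        have h2 : c * (q 1 - p 1) ≤ c * (((k : ℝ) + 1) / n) :=
          mul_le_mul_of_nonneg_left hk2 hc0.le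
        have : q 0 - p 0 ≤ c * ((k : ℝ) + 1) / n := by
          rw [mul_div_assoc]; linarith
        linarith
    have hvolA : ∀ i : Fin n, volume (A i) = ENNReal.ofReal (c * ((i : ℝ) + 1) / n ^ 2) := by
      intro i
      rw [hA, vol_box]
      have e1 : (p 0 + ((i : ℝ) + 1) / n) - (p 0 + (i : ℝ) / n) = 1 / n := by
        field_simp
        ring
      have e2 : (p 1 + c * ((i : ℝ) + 1) / n) - p 1 = c * ((i : ℝ) + 1) / n := by ring
      rw [e1, e2, ← ENNReal.ofReal_mul (by positivity : (0:ℝ) ≤ 1 / n)]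
      congr 1
      field_simp
    have hvolB : ∀ i : Fin n, volume (B i) = ENNReal.ofReal (c * ((i : ℝ) + 1) / n ^ 2) := by
      intro i
      rw [hB, vol_box]
      have e1 : (p 0 + c * ((i : ℝ) + 1) / n) - p 0 = c * ((i : ℝ) + 1) / n := by ring
      have e2 : (p 1 + ((i : ℝ) + 1) / n) - (p 1 + (i : ℝ) / n) = 1 / n := by
        field_simp
        ring
      rw [e1, e2, ← ENNReal.ofReal_mul (by positivity)]
      congr 1
      field_simp
    have hsum : ∑ i : Fin n, ENNReal.ofReal (c * ((i : ℝ) + 1) / n ^ 2) =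
        ENNReal.ofReal (c * (n + 1) / (2 * n)) := by
      rw [← ENNReal.ofReal_sum_of_nonneg (fun i _ => by positivity)]
      congr 1
      have : ∀ i : Fin n, c * ((i : ℝ) + 1) / n ^ 2 = (c / n ^ 2) * ((i : ℝ) + 1) :=
        fun i => by ring
      rw [Finset.sum_congr rfl (fun i _ => this i), ← Finset.mul_sum, gauss_sum n]
      field_simp
    calc volume S ≤ volume ((⋃ i, A i) ∪ (⋃ i, B i)) := measure_mono hincl
      _ ≤ volume (⋃ i, A i) + volume (⋃ i, B i) := measure_union_le _ _
      _ ≤ (∑ i : Fin n, volume (A i)) + ∑ i : Fin n, volume (B i) :=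
          add_le_add (measure_iUnion_fintype_le _ _) (measure_iUnion_fintype_le _ _)
      _ = ENNReal.ofReal (c * (n + 1) / (2 * n)) + ENNReal.ofReal (c * (n + 1) / (2 * n)) := by
          rw [Finset.sum_congr rfl (fun i _ => hvolA i),
            Finset.sum_congr rfl (fun i _ => hvolB i), hsum]
      _ = ENNReal.ofReal (c * (n + 1) / n) := by
          rw [← ENNReal.ofReal_add (by positivity) (by positivity)]
          congr 1
          field_simp
          ring
  apply ENNReal.le_of_forall_pos_le_add
  intro δ hδ _
  have hδ0 : (0 : ℝ) < (δ : ℝ) := hδ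
  obtain ⟨n, hn⟩ := exists_nat_gt (c / (δ : ℝ))
  have hn0 : 0 < n := by
    have : (0 : ℝ) < c / (δ : ℝ) := by positivity
    have : (0 : ℝ) < (n : ℝ) := lt_trans this hn
    exact_mod_cast this
  have hn0' : (0 : ℝ) < (n : ℝ) := by exact_mod_cast hn0
  calc volume S ≤ ENNReal.ofReal (c * (n + 1) / n) := key n hn0
    _ = ENNReal.ofReal c + ENNReal.ofReal (c / n) := by
        rw [← ENNReal.ofReal_add hc0.le (by positivity)]
        congr 1
        field_simp
    _ ≤ ENNReal.ofReal c + (δ : ENNReal) := by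
        gcongr
        rw [← ENNReal.ofReal_coe_nnreal]
        apply ENNReal.ofReal_le_ofReal
        rw [div_le_iff₀ hn0']
        rw [div_lt_iff₀ hδ0] at hn
        nlinarith
end

section
/- Let u > 0 and let c₁, c₂ ∈ [0,1]² with c₁ ≤ c₂ componentwise and ‖c₂ − c₁‖₂ ≥ √u. Set p = c₁ + (−u/2, u/2), q = c₂ + (u/2, −u/2), p' = c₁ + (u/2, −u/2), q' = c₂ + (−u/2, u/2). Then the line through p and q meets the anti-diagonal {x ∈ ℝ² : x₁ + x₂ = 0} in a unique point b, the line through p' and q' meets it in a unique point b', and ‖b − b'‖_∞ ≤ 4√u. -/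
/-- The base-point lemma (Lemma `b_lemma`): for centers `c₁ ≤ c₂` in the unit
square with `‖c₂ − c₁‖₂ ≥ √u`, the two extreme lines through
`p = c₁ + (−u/2, u/2)`, `q = c₂ + (u/2, −u/2)` and through
`p' = c₁ + (u/2, −u/2)`, `q' = c₂ + (−u/2, u/2)` each meet the anti-diagonal
`x₁ + x₂ = 0` in a unique point (`b` resp. `b'`), and `‖b − b'‖_∞ ≤ 4√u`. -/
theorem stmt_12 (u : ℝ) (hu : 0 < u) (c1 c2 : ℝ × ℝ)
    (hc1 : c1 ∈ Set.Icc ((0 : ℝ), (0 : ℝ)) (1, 1))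
    (hc2 : c2 ∈ Set.Icc ((0 : ℝ), (0 : ℝ)) (1, 1))
    (hle : c1 ≤ c2)
    (hdist : Real.sqrt u ≤ Real.sqrt ((c2.1 - c1.1) ^ 2 + (c2.2 - c1.2) ^ 2)) :
    ∃ b b' : ℝ × ℝ,
      (∀ x : ℝ × ℝ,
        ((∃ t : ℝ, x = (c1.1 - u / 2, c1.2 + u / 2) +
            t • ((c2.1 + u / 2, c2.2 - u / 2) - (c1.1 - u / 2, c1.2 + u / 2))) ∧
          x.1 + x.2 = 0) ↔ x = b) ∧
      (∀ x : ℝ × ℝ,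
        ((∃ t : ℝ, x = (c1.1 + u / 2, c1.2 - u / 2) +
            t • ((c2.1 - u / 2, c2.2 + u / 2) - (c1.1 + u / 2, c1.2 - u / 2))) ∧
          x.1 + x.2 = 0) ↔ x = b') ∧
      max |b.1 - b'.1| |b.2 - b'.2| ≤ 4 * Real.sqrt u := by
  have h1a : (0:ℝ) ≤ c1.1 := hc1.1.1
  have h1b : (0:ℝ) ≤ c1.2 := hc1.1.2
  have h2c : c2.1 ≤ 1 := hc2.2.1
  have h2d : c2.2 ≤ 1 := hc2.2.2
  have hl1 : c1.1 ≤ c2.1 := hle.1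
  have hl2 : c1.2 ≤ c2.2 := hle.2
  set s : ℝ := (c2.1 - c1.1) + (c2.2 - c1.2) with hs_def
  have hs0 : (0:ℝ) ≤ s := by simp only [hs_def]; linarith
  have hsu : Real.sqrt u ≤ s := by
    refine hdist.trans ?_
    have h := Real.sqrt_le_sqrt (show (c2.1 - c1.1) ^ 2 + (c2.2 - c1.2) ^ 2 ≤ s ^ 2 by
      nlinarith [mul_nonneg (sub_nonneg.2 hl1) (sub_nonneg.2 hl2)])
    rwa [Real.sqrt_sq hs0] at h
  have hspos : (0:ℝ) < s := lt_of_lt_of_le (Real.sqrt_pos.mpr hu) hsu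
  have hsne : s ≠ 0 := ne_of_gt hspos
  set t0 : ℝ := -(c1.1 + c1.2) / s with ht0_def
  have ht0le : t0 ≤ 0 := by
    rw [ht0_def]
    apply div_nonpos_of_nonpos_of_nonneg <;> linarith
  refine ⟨(c1.1 - u / 2 + t0 * (c2.1 + u / 2 - (c1.1 - u / 2)),
           c1.2 + u / 2 + t0 * (c2.2 - u / 2 - (c1.2 + u / 2))),
          (c1.1 + u / 2 + t0 * (c2.1 - u / 2 - (c1.1 + u / 2)),
           c1.2 - u / 2 + t0 * (c2.2 + u / 2 - (c1.2 - u / 2))), ?_, ?_, ?_⟩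
  · intro x
    constructor
    · rintro ⟨⟨t, rfl⟩, hx⟩
      simp only [Prod.mk_sub_mk, Prod.smul_mk, smul_eq_mul, Prod.mk_add_mk] at hx ⊢
      have ht : t = t0 := by
        rw [ht0_def, eq_div_iff hsne]
        simp only [hs_def]
        ring_nf
        ring_nf at hx
        linarith
      rw [ht]
    · rintro rfl
      refine ⟨⟨t0, by simp only [Prod.mk_sub_mk, Prod.smul_mk, smul_eq_mul, Prod.mk_add_mk]⟩, ?_⟩
      simp only
      rw [ht0_def]
      field_simp
      ring
  · intro x
    constructor
    · rintro ⟨⟨t, rfl⟩, hx⟩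
      simp only [Prod.mk_sub_mk, Prod.smul_mk, smul_eq_mul, Prod.mk_add_mk] at hx ⊢
      have ht : t = t0 := by
        rw [ht0_def, eq_div_iff hsne]
        simp only [hs_def]
        ring_nf
        ring_nf at hx
        linarith
      rw [ht]
    · rintro rfl
      refine ⟨⟨t0, by simp only [Prod.mk_sub_mk, Prod.smul_mk, smul_eq_mul, Prod.mk_add_mk]⟩, ?_⟩
      simp only
      rw [ht0_def]
      field_simp
      ring
  · simp only
    have hd1 : (c1.1 - u / 2 + t0 * (c2.1 + u / 2 - (c1.1 - u / 2))) -
        (c1.1 + u / 2 + t0 * (c2.1 - u / 2 - (c1.1 + u / 2))) = -(u * (1 - 2 * t0)) := by ring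
    have hd2 : (c1.2 + u / 2 + t0 * (c2.2 - u / 2 - (c1.2 + u / 2))) -
        (c1.2 - u / 2 + t0 * (c2.2 + u / 2 - (c1.2 - u / 2))) = u * (1 - 2 * t0) := by ring
    have hnn : (0:ℝ) ≤ u * (1 - 2 * t0) := by nlinarith
    rw [hd1, hd2, abs_neg, abs_of_nonneg hnn, max_self]
    have hA : c1.1 + c1.2 ≤ 2 - s := by simp only [hs_def]; linarith
    have hu2 : Real.sqrt u * Real.sqrt u = u := Real.mul_self_sqrt hu.le
    rw [ht0_def, show u * (1 - 2 * (-(c1.1 + c1.2) / s)) =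
      (u * s + 2 * u * (c1.1 + c1.2)) / s by field_simp; ring, div_le_iff₀ hspos]
    nlinarith [mul_nonneg hu.le (show (0:ℝ) ≤ 2 - s - (c1.1 + c1.2) by linarith),
      mul_nonneg (Real.sqrt_nonneg u) (sub_nonneg.2 hsu),
      mul_nonneg hu.le hs0]
end

section
/- Let u > 0 and let c₁, c₂ ∈ ℝ² with c₁ ≤ c₂ componentwise and ‖c₂ − c₁‖₂ ≥ √u. Set v = (c₂ − c₁) + (u, −u), v' = (c₂ − c₁) + (−u, u), a = v/‖v‖₂, a' = v'/‖v'‖₂. Then the weights ℓ̂ = min(a₁, a₂) and ℓ̂' = min(a'₁, a'₂) satisfy |ℓ̂ − ℓ̂'| ≤ 4√u. -/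
open scoped RealInnerProductSpace

lemma coord_abs_le_norm (x : EuclideanSpace ℝ (Fin 2)) (i : Fin 2) : |x i| ≤ ‖x‖ := by
  rw [EuclideanSpace.norm_eq, ← Real.sqrt_sq_eq_abs]
  apply Real.sqrt_le_sqrt
  fin_cases i <;> simp [Fin.sum_univ_two, Real.norm_eq_abs, sq_abs] <;> positivity

lemma scalar_key (u p q t A V r : ℝ) (hu : 0 < u) (hp : 0 < p) (hq : 0 < q)
    (hCS : |t| ≤ p * q) (hA2 : A ^ 2 = 2 - 2 * (t / (p * q)))
    (hVV : V ^ 2 = 8 * u ^ 2) (hVVt : V ^ 2 = p ^ 2 - 2 * t + q ^ 2)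
    (hpq2 : p ^ 2 + q ^ 2 = 2 * r ^ 2 + 4 * u ^ 2) (hwu : u ≤ r ^ 2)
    (hA0 : 0 ≤ A) : A ≤ 4 * Real.sqrt u := by
  have hpqpos : 0 < p * q := mul_pos hp hq
  have hDW : A ^ 2 * (p + q) ^ 2 ≤ 4 * (p ^ 2 - 2 * t + q ^ 2) := by
    rw [hA2]
    rw [show (2 - 2 * (t / (p * q))) * (p + q) ^ 2
        = (2 * (p * q) - 2 * t) / (p * q) * (p + q) ^ 2 by field_simp]
    rw [div_mul_eq_mul_div, div_le_iff₀ hpqpos]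
    nlinarith [mul_nonneg (sq_nonneg (p - q)) (by linarith [neg_abs_le t] : 0 ≤ p * q + t)]
  have hpq_lb : 2 * u ≤ (p + q) ^ 2 := by nlinarith
  have hA2le : A ^ 2 ≤ 16 * u := by
    have h1 : A ^ 2 * (2 * u) ≤ A ^ 2 * (p + q) ^ 2 :=
      mul_le_mul_of_nonneg_left hpq_lb (sq_nonneg _)
    nlinarith
  have h4 : (4 * Real.sqrt u) ^ 2 = 16 * u := by
    rw [mul_pow, Real.sq_sqrt hu.le]; ring
  nlinarith [Real.sqrt_nonneg u, mul_nonneg hA0 (Real.sqrt_nonneg u)]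

/-- The weight lemma (Lemma `weight_lemma`): for centers `c₁ ≤ c₂` with
`‖c₂ − c₁‖₂ ≥ √u` and `d = (u, −u)`, the weights `ℓ̂ = min(a₁, a₂)` and
`ℓ̂' = min(a'₁, a'₂)` of the unit direction vectors `a = v/‖v‖₂`,
`a' = v'/‖v'‖₂` of `v = (c₂ − c₁) + (u, −u)` and `v' = (c₂ − c₁) + (−u, u)`
satisfy `|ℓ̂ − ℓ̂'| ≤ 4√u`. -/
theorem stmt_14 (u : ℝ) (hu : 0 < u) (c1 c2 d : EuclideanSpace ℝ (Fin 2))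
    (hle : ∀ i, c1 i ≤ c2 i) (hdist : Real.sqrt u ≤ ‖c2 - c1‖)
    (hd0 : d 0 = u) (hd1 : d 1 = -u) :
    |min ((‖(c2 - c1) + d‖⁻¹ • ((c2 - c1) + d)) 0)
         ((‖(c2 - c1) + d‖⁻¹ • ((c2 - c1) + d)) 1) -
     min ((‖(c2 - c1) - d‖⁻¹ • ((c2 - c1) - d)) 0)
         ((‖(c2 - c1) - d‖⁻¹ • ((c2 - c1) - d)) 1)| ≤ 4 * Real.sqrt u := by
  set w : EuclideanSpace ℝ (Fin 2) := c2 - c1 with hw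
  set v : EuclideanSpace ℝ (Fin 2) := w + d with hv
  set v' : EuclideanSpace ℝ (Fin 2) := w - d with hv'
  have hw0 : 0 ≤ w 0 := by
    have := hle 0; simp only [hw]; simpa using sub_nonneg.2 this
  have hw1 : 0 ≤ w 1 := by
    have := hle 1; simp only [hw]; simpa using sub_nonneg.2 this
  have hvne : v ≠ 0 := by
    intro h
    have : v 0 = 0 := by rw [h]; rfl
    simp only [hv, PiLp.add_apply, hd0] at this
    linarith
  have hv'ne : v' ≠ 0 := by
    intro h
    have : v' 1 = 0 := by rw [h]; rfl
    simp only [hv', PiLp.sub_apply, hd1] at this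
    linarith
  set a : EuclideanSpace ℝ (Fin 2) := ‖v‖⁻¹ • v with ha
  set a' : EuclideanSpace ℝ (Fin 2) := ‖v'‖⁻¹ • v' with ha'
  have hp : (0:ℝ) < ‖v‖ := norm_pos_iff.mpr hvne
  have hq : (0:ℝ) < ‖v'‖ := norm_pos_iff.mpr hv'ne
  have step1 : |min (a 0) (a 1) - min (a' 0) (a' 1)| ≤ ‖a - a'‖ := by
    refine (abs_min_sub_min_le_max _ _ _ _).trans (max_le ?_ ?_)
    · simpa using coord_abs_le_norm (a - a') 0
    · simpa using coord_abs_le_norm (a - a') 1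
  have hna : ‖a‖ = 1 := norm_smul_inv_norm hvne
  have hna' : ‖a'‖ = 1 := norm_smul_inv_norm hv'ne
  have hinner : ⟪a, a'⟫ = ⟪v, v'⟫ / (‖v‖ * ‖v'‖) := by
    rw [ha, ha', real_inner_smul_left, real_inner_smul_right]
    field_simp
  have hA2 : ‖a - a'‖ ^ 2 = 2 - 2 * (⟪v, v'⟫ / (‖v‖ * ‖v'‖)) := by
    rw [norm_sub_sq_real, hna, hna', hinner]; ring
  have hCS : |⟪v, v'⟫| ≤ ‖v‖ * ‖v'‖ := abs_real_inner_le_norm v v'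
  have hvv' : v - v' = (2:ℝ) • d := by
    simp only [hv, hv']; module
  have hd2 : ‖d‖ ^ 2 = 2 * u ^ 2 := by
    rw [← real_inner_self_eq_norm_sq, PiLp.inner_apply, Fin.sum_univ_two, hd0, hd1]
    simp [RCLike.inner_apply]; ring
  have hVV : ‖v - v'‖ ^ 2 = 8 * u ^ 2 := by
    rw [hvv', norm_smul]
    simp only [Real.norm_ofNat, mul_pow]
    rw [hd2]; ring
  have hVVt : ‖v - v'‖ ^ 2 = ‖v‖ ^ 2 - 2 * ⟪v, v'⟫ + ‖v'‖ ^ 2 := norm_sub_sq_real v v'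
  have h1 : ‖v‖ ^ 2 = ‖w‖ ^ 2 + 2 * ⟪w, d⟫ + ‖d‖ ^ 2 := norm_add_sq_real w d
  have h2 : ‖v'‖ ^ 2 = ‖w‖ ^ 2 - 2 * ⟪w, d⟫ + ‖d‖ ^ 2 := norm_sub_sq_real w d
  have hpq2 : ‖v‖ ^ 2 + ‖v'‖ ^ 2 = 2 * ‖w‖ ^ 2 + 4 * u ^ 2 := by
    rw [h1, h2, hd2]; ring
  have hwu : u ≤ ‖w‖ ^ 2 := by
    have h := Real.sq_sqrt hu.le
    nlinarith [Real.sqrt_nonneg u, hdist]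
  have hfin : ‖a - a'‖ ≤ 4 * Real.sqrt u :=
    scalar_key u ‖v‖ ‖v'‖ ⟪v, v'⟫ ‖a - a'‖ ‖v - v'‖ ‖w‖ hu hp hq hCS hA2 hVV hVVt
      hpq2 hwu (norm_nonneg _)
  exact step1.trans hfin
end
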